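/- Let G be a connected r-regular simple graph with n vertices and m edges, and let L_RT denote the Laplacian matrix of RT(G) written in block form. Then for every real number μ with μ ≠ 1, μ ≠ 2 and μ ≠ 3, det(μ·I_{m+3n} − L_RT) = (μ−1)^n · (μ−2)^(m−n) · (μ−3)^n · (3−μ)^n · det( x·I_n − A(G) ), where x = (μ−2)²/(3−μ) + r(2μ−3)/(μ−3) + 2(μ−2)/((μ−1)(μ−3)) and A(G) is the adjacency matrix of G. -/

import Mathlib

open Matrix SimpleGraph Kronecker Finset

/-- The Laplacian matrix of `RT(G)` in block form, given the vertex–edge incidence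
matrix `B` of an `r`-regular graph `G` and its Laplacian matrix `L`.  The index type is
(edge-vertices of `G`) ⊕ (original vertices of `G`) ⊕ (pairs of new vertices). -/
def LRTMatrix {n m : ℕ} (r : ℕ) (B : Matrix (Fin n) (Fin m) ℝ)
    (L : Matrix (Fin n) (Fin n) ℝ) :
    Matrix (Fin m ⊕ Fin n ⊕ Fin n × Fin 2) (Fin m ⊕ Fin n ⊕ Fin n × Fin 2) ℝ :=
  fun i j =>
    match i, j with
    | Sum.inl a, Sum.inl b => if a = b then 2 else 0
    | Sum.inl a, Sum.inr (Sum.inl v) => -(B v a)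
    | Sum.inl _, Sum.inr (Sum.inr _) => 0
    | Sum.inr (Sum.inl v), Sum.inl a => -(B v a)
    | Sum.inr (Sum.inl v), Sum.inr (Sum.inl w) => L v w + (if v = w then (r : ℝ) + 2 else 0)
    | Sum.inr (Sum.inl v), Sum.inr (Sum.inr (w, _)) => if v = w then -1 else 0
    | Sum.inr (Sum.inr _), Sum.inl _ => 0
    | Sum.inr (Sum.inr (w, _)), Sum.inr (Sum.inl v) => if w = v then -1 else 0
    | Sum.inr (Sum.inr (w, k)), Sum.inr (Sum.inr (w', k')) =>
        if w = w' then (if k = k' then 2 else -1) else 0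

private lemma sum_subtype_eq_sum {α : Type*} [Fintype α] {p : α → Prop} [DecidablePred p]
    [Fintype (Subtype p)] (f : α → ℝ) (h0 : ∀ x, ¬ p x → f x = 0) :
    ∑ x : Subtype p, f ↑x = ∑ x, f x := by
  rw [← Finset.sum_subtype (Finset.univ.filter p) (by simp) f]
  exact Finset.sum_filter_of_ne (fun x _ hfx => by by_contra hp; exact hfx (h0 x hp))

private lemma BBt_eq {n m : ℕ} {r : ℕ} (G : SimpleGraph (Fin n)) [DecidableRel G.Adj]
    (hreg : G.IsRegularOfDegree r) (φ : Fin m ≃ G.edgeSet) (B : Matrix (Fin n) (Fin m) ℝ)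
    (hB : ∀ (v : Fin n) (j : Fin m), B v j = if v ∈ (φ j : Sym2 (Fin n)) then 1 else 0)
    (v w : Fin n) :
    ∑ j, B v j * B w j = G.adjMatrix ℝ v w + (if v = w then (r:ℝ) else 0) := by
  classical
  have hBinc : ∀ (v : Fin n) (j : Fin m), B v j = G.incMatrix ℝ v (φ j) := by
    intro v j
    rw [hB, incMatrix_apply']
    refine if_congr ?_ rfl rfl
    simp [SimpleGraph.incidenceSet, (φ j).prop]
  calc ∑ j, B v j * B w j
      = ∑ j, (fun e : G.edgeSet =>
          G.incMatrix ℝ v (e : Sym2 (Fin n)) * G.incMatrix ℝ w e) (φ j) := by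
        simp only [hBinc]
    _ = ∑ e : G.edgeSet, G.incMatrix ℝ v (e : Sym2 (Fin n)) * G.incMatrix ℝ w e :=
        Equiv.sum_comp φ (fun e : G.edgeSet =>
          G.incMatrix ℝ v (e : Sym2 (Fin n)) * G.incMatrix ℝ w (e : Sym2 (Fin n)))
    _ = ∑ e : Sym2 (Fin n), G.incMatrix ℝ v e * G.incMatrix ℝ w e := by
        refine sum_subtype_eq_sum (p := fun e => e ∈ G.edgeSet)
          (fun e => G.incMatrix ℝ v e * G.incMatrix ℝ w e) (fun e he => ?_)
        have : G.incMatrix ℝ v e = 0 := G.incMatrix_of_notMem_incidenceSet (fun h => he h.1)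
        simp [this]
    _ = (G.incMatrix ℝ * (G.incMatrix ℝ)ᵀ) v w := by simp [Matrix.mul_apply]
    _ = G.adjMatrix ℝ v w + (if v = w then (r:ℝ) else 0) := by
        rw [incMatrix_mul_transpose]
        rcases eq_or_ne v w with rfl | hvw
        · simp [hreg v]
        · simp [hvw, adjMatrix_apply]

private def gmat (μ : ℝ) : Matrix (Fin 2) (Fin 2) ℝ :=
  fun k k' => if k = k' then μ - 2 else 1

private noncomputable def gmatInv (μ : ℝ) : Matrix (Fin 2) (Fin 2) ℝ :=
  fun k k' => if k = k' then (μ-2)/((μ-1)*(μ-3)) else -1/((μ-1)*(μ-3))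

private lemma gmat_mul_gmatInv {μ : ℝ} (h1 : μ ≠ 1) (h3 : μ ≠ 3) :
    gmat μ * gmatInv μ = 1 := by
  have hμ1 : μ - 1 ≠ 0 := sub_ne_zero.mpr h1
  have hμ3 : μ - 3 ≠ 0 := sub_ne_zero.mpr h3
  ext i j
  fin_cases i <;> fin_cases j <;>
    simp [gmat, gmatInv, Matrix.mul_apply, Fin.sum_univ_two, Matrix.one_apply] <;>
    field_simp <;> ring

private lemma gmatInv_mul_gmat {μ : ℝ} (h1 : μ ≠ 1) (h3 : μ ≠ 3) :
    gmatInv μ * gmat μ = 1 := by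
  have hμ1 : μ - 1 ≠ 0 := sub_ne_zero.mpr h1
  have hμ3 : μ - 3 ≠ 0 := sub_ne_zero.mpr h3
  ext i j
  fin_cases i <;> fin_cases j <;>
    simp [gmat, gmatInv, Matrix.mul_apply, Fin.sum_univ_two, Matrix.one_apply] <;>
    field_simp <;> ring

private def blkA12 {n m : ℕ} (B : Matrix (Fin n) (Fin m) ℝ) :
    Matrix (Fin m) (Fin n ⊕ Fin n × Fin 2) ℝ :=
  fun j => Sum.elim (fun v => B v j) (fun _ => 0)

private def blkA21 {n m : ℕ} (B : Matrix (Fin n) (Fin m) ℝ) :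
    Matrix (Fin n ⊕ Fin n × Fin 2) (Fin m) ℝ :=
  fun p j => Sum.elim (fun v => B v j) (fun _ => 0) p

private def blkE {n : ℕ} (r : ℕ) (μ : ℝ) (L : Matrix (Fin n) (Fin n) ℝ) :
    Matrix (Fin n) (Fin n) ℝ :=
  fun v w => (if v = w then μ - ((r:ℝ)+2) else 0) - L v w

private def blkF {n : ℕ} : Matrix (Fin n) (Fin n × Fin 2) ℝ :=
  fun v p => if v = p.1 then 1 else 0

private def blkF' {n : ℕ} : Matrix (Fin n × Fin 2) (Fin n) ℝ :=
  fun p v => if p.1 = v then 1 else 0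

private lemma LRT_decomp {n m : ℕ} (r : ℕ) (μ : ℝ) (B : Matrix (Fin n) (Fin m) ℝ)
    (L : Matrix (Fin n) (Fin n) ℝ) :
    μ • (1 : Matrix (Fin m ⊕ Fin n ⊕ Fin n × Fin 2) (Fin m ⊕ Fin n ⊕ Fin n × Fin 2) ℝ)
      - LRTMatrix r B L
    = fromBlocks ((μ - 2) • 1) (blkA12 B) (blkA21 B)
        (fromBlocks (blkE r μ L) blkF blkF' ((1 : Matrix (Fin n) (Fin n) ℝ) ⊗ₖ gmat μ)) := by
  ext i j
  rcases i with a | v | ⟨w, k⟩ <;> rcases j with b | v' | ⟨w', k'⟩ <;>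
    simp [LRTMatrix, blkA12, blkA21, blkE, blkF, blkF', gmat, Matrix.one_apply,
      Prod.ext_iff ] <;> split_ifs <;> simp_all <;> ring

private lemma A21_mul_A12 {n m : ℕ} (B : Matrix (Fin n) (Fin m) ℝ) :
    blkA21 B * blkA12 B
      = fromBlocks (fun v w => ∑ j, B v j * B w j) 0 0
          (0 : Matrix (Fin n × Fin 2) (Fin n × Fin 2) ℝ) := by
  ext p q
  rcases p with v | p <;> rcases q with w | q <;>
    simp [Matrix.mul_apply, blkA21, blkA12, fromBlocks]

private lemma FGF {n : ℕ} (μ : ℝ) :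
    (blkF : Matrix (Fin n) (Fin n × Fin 2) ℝ) * ((1 : Matrix (Fin n) (Fin n) ℝ) ⊗ₖ gmatInv μ)
        * (blkF' : Matrix (Fin n × Fin 2) (Fin n) ℝ)
      = (2 * (μ - 3) / ((μ-1)*(μ-3))) • (1 : Matrix (Fin n) (Fin n) ℝ) := by
  ext v w
  simp [Matrix.mul_apply, Fintype.sum_prod_type, blkF, blkF', gmatInv,
    Matrix.one_apply, Fin.sum_univ_two, ite_and]
  simp only [Finset.sum_add_distrib, Finset.sum_ite_eq', Finset.mem_univ, if_true]
  rcases eq_or_ne v w with rfl | hvw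
  · simp
    ring
  · simp [hvw, Ne.symm hvw]

private lemma final_block {n : ℕ} (r : ℕ) (μ : ℝ) (h1 : μ ≠ 1) (h2 : μ ≠ 2) (h3 : μ ≠ 3)
    (G : SimpleGraph (Fin n)) [DecidableRel G.Adj] (hreg : G.IsRegularOfDegree r) :
    blkE r μ (G.lapMatrix ℝ) - (μ-2)⁻¹ • (G.adjMatrix ℝ + (r:ℝ) • 1)
        - (2 * (μ - 3) / ((μ-1)*(μ-3))) • 1
      = ((3-μ)/(μ-2)) •
          ((((μ - 2) ^ 2 / (3 - μ) + (r : ℝ) * (2 * μ - 3) / (μ - 3)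
              + 2 * (μ - 2) / ((μ - 1) * (μ - 3))) • (1 : Matrix (Fin n) (Fin n) ℝ))
            - G.adjMatrix ℝ) := by
  have hμ1 : μ - 1 ≠ 0 := sub_ne_zero.mpr h1
  have hμ2 : μ - 2 ≠ 0 := sub_ne_zero.mpr h2
  have hμ3 : μ - 3 ≠ 0 := sub_ne_zero.mpr h3
  have h3μ : (3:ℝ) - μ ≠ 0 := fun h => h3 (by linarith [sub_eq_zero.mp h])
  ext v w
  rcases eq_or_ne v w with rfl | hvw
  · have hA : G.adjMatrix ℝ v v = 0 := by simp
    simp [blkE, lapMatrix, degMatrix, hreg v, hA, Matrix.smul_apply, Matrix.one_apply]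
    field_simp
    ring
  · simp [blkE, lapMatrix, degMatrix, hvw, Matrix.smul_apply, Matrix.one_apply]
    split_ifs with hadj
    · field_simp
      ring
    · simp

theorem laplacian_polynomial_RT_adjacency_form {n m : ℕ} (r : ℕ)
    (G : SimpleGraph (Fin n)) [DecidableRel G.Adj]
    (hconn : G.Connected) (hreg : G.IsRegularOfDegree r)
    (φ : Fin m ≃ G.edgeSet) (B : Matrix (Fin n) (Fin m) ℝ)
    (hB : ∀ (v : Fin n) (j : Fin m), B v j = if v ∈ (φ j : Sym2 (Fin n)) then 1 else 0)
    (μ : ℝ) (h1 : μ ≠ 1) (h2 : μ ≠ 2) (h3 : μ ≠ 3) :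
    (μ • (1 : Matrix (Fin m ⊕ Fin n ⊕ Fin n × Fin 2) (Fin m ⊕ Fin n ⊕ Fin n × Fin 2) ℝ)
        - LRTMatrix r B (G.lapMatrix ℝ)).det
      = (μ - 1) ^ n * (μ - 2) ^ ((m : ℤ) - (n : ℤ)) * (μ - 3) ^ n * (3 - μ) ^ n *
        ((((μ - 2) ^ 2 / (3 - μ) + (r : ℝ) * (2 * μ - 3) / (μ - 3)
              + 2 * (μ - 2) / ((μ - 1) * (μ - 3)))
            • (1 : Matrix (Fin n) (Fin n) ℝ)) - G.adjMatrix ℝ).det := by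
  classical
  have hμ1 : μ - 1 ≠ 0 := sub_ne_zero.mpr h1
  have hμ2 : μ - 2 ≠ 0 := sub_ne_zero.mpr h2
  have hμ3 : μ - 3 ≠ 0 := sub_ne_zero.mpr h3
  have h3μ : (3:ℝ) - μ ≠ 0 := fun h => h3 (by linarith [sub_eq_zero.mp h])
  have hA11inv : ((μ - 2) • (1 : Matrix (Fin m) (Fin m) ℝ)) * ((μ - 2)⁻¹ • 1) = 1 := by
    rw [Matrix.smul_mul, Matrix.mul_smul, Matrix.one_mul, smul_smul,
      mul_inv_cancel₀ hμ2, one_smul]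
  have hA11inv' : ((μ - 2)⁻¹ • (1 : Matrix (Fin m) (Fin m) ℝ)) * ((μ - 2) • 1) = 1 := by
    rw [Matrix.smul_mul, Matrix.mul_smul, Matrix.one_mul, smul_smul,
      inv_mul_cancel₀ hμ2, one_smul]
  haveI iA11 : Invertible ((μ - 2) • (1 : Matrix (Fin m) (Fin m) ℝ)) :=
    ⟨(μ - 2)⁻¹ • 1, hA11inv', hA11inv⟩
  have hGinv : ((1 : Matrix (Fin n) (Fin n) ℝ) ⊗ₖ gmat μ) * (1 ⊗ₖ gmatInv μ) = 1 := by
    rw [← Matrix.mul_kronecker_mul, Matrix.one_mul, gmat_mul_gmatInv h1 h3,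
      Matrix.one_kronecker_one]
  have hGinv' : ((1 : Matrix (Fin n) (Fin n) ℝ) ⊗ₖ gmatInv μ) * (1 ⊗ₖ gmat μ) = 1 := by
    rw [← Matrix.mul_kronecker_mul, Matrix.one_mul, gmatInv_mul_gmat h1 h3,
      Matrix.one_kronecker_one]
  haveI iG : Invertible ((1 : Matrix (Fin n) (Fin n) ℝ) ⊗ₖ gmat μ) :=
    ⟨1 ⊗ₖ gmatInv μ, hGinv', hGinv⟩
  rw [LRT_decomp, Matrix.det_fromBlocks₁₁]
  rw [invOf_eq_right_inv hA11inv]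
  have hBBt : (fun v w => ∑ j, B v j * B w j)
      = G.adjMatrix ℝ + (r:ℝ) • (1 : Matrix (Fin n) (Fin n) ℝ) := by
    ext v w
    rw [BBt_eq G hreg φ B hB v w]
    simp [Matrix.one_apply, mul_ite]
  have hprod : blkA21 B * ((μ - 2)⁻¹ • (1 : Matrix (Fin m) (Fin m) ℝ)) * blkA12 B
      = fromBlocks ((μ-2)⁻¹ • (G.adjMatrix ℝ + (r:ℝ) • 1)) 0 0 0 := by
    rw [Matrix.mul_smul, Matrix.mul_one, Matrix.smul_mul, A21_mul_A12, hBBt,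
      Matrix.fromBlocks_smul]
    simp
  rw [hprod]
  have hsub : fromBlocks (blkE r μ (G.lapMatrix ℝ)) blkF blkF'
        ((1 : Matrix (Fin n) (Fin n) ℝ) ⊗ₖ gmat μ)
      - fromBlocks ((μ-2)⁻¹ • (G.adjMatrix ℝ + (r:ℝ) • 1)) 0 0 0
      = fromBlocks (blkE r μ (G.lapMatrix ℝ) - (μ-2)⁻¹ • (G.adjMatrix ℝ + (r:ℝ) • 1))
          blkF blkF' ((1 : Matrix (Fin n) (Fin n) ℝ) ⊗ₖ gmat μ) := by
    rw [sub_eq_add_neg, Matrix.fromBlocks_neg, Matrix.fromBlocks_add]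
    simp only [neg_zero, add_zero, ← sub_eq_add_neg]
  rw [hsub, Matrix.det_fromBlocks₂₂, invOf_eq_right_inv hGinv, FGF,
    final_block r μ h1 h2 h3 G hreg]
  rw [Matrix.det_smul, Matrix.det_smul, Matrix.det_kronecker, Matrix.det_one]
  have hdetg : (gmat μ).det = (μ-2)^2 - 1 := by
    rw [Matrix.det_fin_two]
    simp [gmat]
    ring
  rw [hdetg]
  rw [zpow_sub₀ hμ2, zpow_natCast, zpow_natCast]
  have hfact : ((μ-2)^2 - 1) = (μ-1)*(μ-3) := by ring
  rw [hfact, mul_pow, div_pow, Matrix.det_one, Fintype.card_fin, Fintype.card_fin]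
  have hpn : ((μ:ℝ) - 2)^n ≠ 0 := pow_ne_zero _ hμ2
  simp only [Fintype.card_fin]
  field_simp
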